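/- Let X be a metric space, μ a measure over X, α > 0, c_α > 0, and A ⊆ X. If the class ℱ_{μ,ζ_α} covers A finely, then the Hausdorff Federer density 𝔡^α(μ,·): A → [0,+∞] is Borel measurable with respect to the subspace topology of A. -/

import Mathlib

open MeasureTheory Set ENNReal Filter

noncomputable section

/-- The subclass `𝒮_{μ,ζ}` of a class of sets `𝒮`, obtained by removing the sets `S`
where `ζ S = μ S = 0` or `ζ S = μ S = +∞`. -/
def goodClass {X : Type*} [MetricSpace X] (μ : OuterMeasure X) (𝒮 : Set (Set X))
    (ζ : Set X → ℝ≥0∞) : Set (Set X) :=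
  {S ∈ 𝒮 | ¬ ((ζ S = 0 ∧ μ S = 0) ∨ (ζ S = ⊤ ∧ μ S = ⊤))}

/-- The quotient function `Q_{μ,ζ}`: equals `+∞` if `ζ S = 0`, `μ S / ζ S` if
`0 < ζ S < +∞`, and `0` if `ζ S = +∞` (note `a / ⊤ = 0` in `ℝ≥0∞`). -/
def fedQuot {X : Type*} [MetricSpace X] (μ : OuterMeasure X) (ζ : Set X → ℝ≥0∞)
    (S : Set X) : ℝ≥0∞ :=
  if ζ S = 0 then ⊤ else μ S / ζ S

/-- A family of sets `ℱ` covers `A` finely: for every `a ∈ A` and every `ε > 0` there is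
`S ∈ ℱ` containing `a` with `diam S < ε`. -/
def CoversFinely {X : Type*} [MetricSpace X] (ℱ : Set (Set X)) (A : Set X) : Prop :=
  ∀ a ∈ A, ∀ ε : ℝ≥0∞, 0 < ε → ∃ S ∈ ℱ, a ∈ S ∧ EMetric.diam S < ε

/-- The Federer density `F^ζ(μ,x)`. -/
def federerDensity {X : Type*} [MetricSpace X] (μ : OuterMeasure X) (𝒮 : Set (Set X))
    (ζ : Set X → ℝ≥0∞) (x : X) : ℝ≥0∞ :=
  ⨅ (ε : ℝ≥0∞) (_ : 0 < ε),
    ⨆ (S : Set X) (_ : S ∈ goodClass μ 𝒮 ζ) (_ : x ∈ S) (_ : EMetric.diam S < ε),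
      fedQuot μ ζ S

/-- The size-`δ` premeasure `φ_{ζ,δ}` of the Carathéodory construction. -/
def preCarMeasure {X : Type*} [MetricSpace X] (𝒮 : Set (Set X)) (ζ : Set X → ℝ≥0∞)
    (δ : ℝ≥0∞) (R : Set X) : ℝ≥0∞ :=
  ⨅ (E : ℕ → Set X) (_ : ∀ j, E j ∈ 𝒮) (_ : ∀ j, EMetric.diam (E j) ≤ δ)
    (_ : R ⊆ ⋃ j, E j), ∑' j, ζ (E j)

/-- The Carathéodory measure `ψ_ζ`. -/
def carMeasure {X : Type*} [MetricSpace X] (𝒮 : Set (Set X)) (ζ : Set X → ℝ≥0∞)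
    (R : Set X) : ℝ≥0∞ :=
  ⨆ (δ : ℝ≥0∞) (_ : 0 < δ), preCarMeasure 𝒮 ζ δ R

/-- The `τ`-enlargement `Ŝ` of a set `S`. -/
def enlargement {X : Type*} [MetricSpace X] (μ : OuterMeasure X) (𝒮 : Set (Set X))
    (ζ : Set X → ℝ≥0∞) (τ : ℝ) (S : Set X) : Set X :=
  ⋃₀ {T ∈ goodClass μ 𝒮 ζ | (T ∩ S).Nonempty ∧
      EMetric.diam T ≤ ENNReal.ofReal τ * EMetric.diam S}

/-- `μ` is a regular (outer) measure: every set is contained in a `μ`-measurable set of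
the same measure. -/
def IsRegularOM {X : Type*} [MetricSpace X] (μ : OuterMeasure X) : Prop :=
  ∀ E : Set X, ∃ F : Set X, E ⊆ F ∧ μ.IsCaratheodory F ∧ μ F = μ E

/-- `μ` is a Borel (outer) measure: every Borel set is `μ`-measurable. -/
def IsBorelOM {X : Type*} [MetricSpace X] (μ : OuterMeasure X) : Prop :=
  ∀ E : Set X, MeasurableSet[borel X] E → μ.IsCaratheodory E

/-- `μ` is a Borel regular (outer) measure. -/
def IsBorelRegularOM {X : Type*} [MetricSpace X] (μ : OuterMeasure X) : Prop :=
  IsBorelOM μ ∧ ∀ E : Set X, ∃ B : Set X, E ⊆ B ∧ MeasurableSet[borel X] B ∧ μ B = μ E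

/-- Carathéodory measurability of a set with respect to a set function. -/
def SetFnCaratheodory {X : Type*} (ν : Set X → ℝ≥0∞) (E : Set X) : Prop :=
  ∀ T : Set X, ν T = ν (T ∩ E) + ν (T \ E)

/-- `μ⌊A << ν⌊A`: absolute continuity of the restrictions to `A`. -/
def AbsContOn {X : Type*} [MetricSpace X] (μ : OuterMeasure X) (ν : Set X → ℝ≥0∞)
    (A : Set X) : Prop :=
  ∀ E : Set X, ν (A ∩ E) = 0 → μ (A ∩ E) = 0

/-- `S` is σ-finite with respect to the set function `ν`. -/
def SigmaFiniteWrt {X : Type*} (ν : Set X → ℝ≥0∞) (S : Set X) : Prop :=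
  ∃ E : ℕ → Set X, S ⊆ ⋃ j, E j ∧ ∀ j, ν (E j) < ⊤

/-- The integral `∫_B f dν` with respect to an (outer) set function `ν`,
via the layer-cake formula. -/
def omIntegral {X : Type*} (ν : Set X → ℝ≥0∞) (B : Set X) (f : X → ℝ≥0∞) : ℝ≥0∞ :=
  ∫⁻ t in Set.Ioi (0 : ℝ), ν {x ∈ B | ENNReal.ofReal t < f x}

/-- The enlargement condition: there are `c ≥ 1` and `η > 0` such that every
`S ∈ 𝒮_{μ,ζ}` admits `S̃ ∈ 𝒮` with `Ŝ ⊆ S̃`, `diam S̃ ≤ c diam S` and `ζ S̃ ≤ η ζ S`. -/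
def EnlCondition {X : Type*} [MetricSpace X] (μ : OuterMeasure X) (𝒮 : Set (Set X))
    (ζ : Set X → ℝ≥0∞) (τ : ℝ) : Prop :=
  ∃ c : ℝ, 1 ≤ c ∧ ∃ η : ℝ, 0 < η ∧ ∀ S ∈ goodClass μ 𝒮 ζ, ∃ S' ∈ 𝒮,
    enlargement μ 𝒮 ζ τ S ⊆ S' ∧ EMetric.diam S' ≤ ENNReal.ofReal c * EMetric.diam S ∧
      ζ S' ≤ ENNReal.ofReal η * ζ S

/-- The gauge `ζ_α(S) = c_α (diam S)^α`. -/
def zetaDiam {X : Type*} [MetricSpace X] (cα α : ℝ) (S : Set X) : ℝ≥0∞ :=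
  ENNReal.ofReal cα * EMetric.diam S ^ α

/-- The family `ℱ` of closed subsets of `X`. -/
def closedSets (X : Type*) [MetricSpace X] : Set (Set X) := {S | IsClosed S}

/-- The family `ℱ_b` of closed balls of `X` (with positive radius). -/
def closedBalls (X : Type*) [MetricSpace X] : Set (Set X) :=
  {S | ∃ (y : X) (r : ℝ), 0 < r ∧ S = Metric.closedBall y r}

/-- The family `ℱ_o` of open balls of `X` (with positive radius). -/
def openBalls (X : Type*) [MetricSpace X] : Set (Set X) :=
  {S | ∃ (y : X) (r : ℝ), 0 < r ∧ S = Metric.ball y r}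

/-- The `α`-dimensional Hausdorff measure `ℋ^α` with normalizing constant `c_α`. -/
def hausdorffMeasureC (X : Type*) [MetricSpace X] (cα α : ℝ) : Set X → ℝ≥0∞ :=
  carMeasure (closedSets X) (zetaDiam cα α)

/-- The `α`-dimensional spherical Hausdorff measure `𝒮^α` with constant `c_α`. -/
def sphericalMeasureC (X : Type*) [MetricSpace X] (cα α : ℝ) : Set X → ℝ≥0∞ :=
  carMeasure (closedBalls X) (zetaDiam cα α)

/-- `X` is diametrically regular. -/
def DiametricallyRegular (X : Type*) [MetricSpace X] : Prop :=
  ∀ x : X, ∃ R > (0 : ℝ), ∃ δ > (0 : ℝ), ∀ y ∈ Metric.ball x R,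
    ContinuousOn (fun r : ℝ => EMetric.diam (Metric.ball y r)) (Set.Ioo 0 δ)

end

section aux
variable {X : Type*} [MetricSpace X]

private lemma zeta_ne_top {cα α : ℝ} (hα : 0 < α) {S : Set X} (h : EMetric.diam S ≠ ⊤) :
    zetaDiam cα α S ≠ ⊤ :=
  ENNReal.mul_ne_top ENNReal.ofReal_ne_top (ENNReal.rpow_ne_top_of_nonneg hα.le h)

private lemma key_mul_lt (μ : OuterMeasure X) {cα α : ℝ} (hα : 0 < α)
    {v : ℝ≥0∞} {S : Set X}
    (hS : S ∈ goodClass μ (closedSets X) (zetaDiam cα α))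
    (hd : EMetric.diam S ≠ ⊤)
    (hQ : v < fedQuot μ (zetaDiam cα α) S) :
    v * zetaDiam cα α S < μ S := by
  by_cases hz : zetaDiam cα α S = 0
  · rw [hz, mul_zero]
    exact pos_iff_ne_zero.mpr fun h0 => hS.2 (Or.inl ⟨hz, h0⟩)
  · rw [fedQuot, if_neg hz] at hQ
    exact (ENNReal.lt_div_iff_mul_lt (Or.inl hz) (Or.inl (zeta_ne_top hα hd))).mp hQ

private lemma exists_delta (μ : OuterMeasure X) {cα α : ℝ} (hα : 0 < α)
    {v ε : ℝ≥0∞} (hv : v ≠ ⊤) {S : Set X}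
    (hdiam : EMetric.diam S < ε)
    (hkey : v * zetaDiam cα α S < μ S) :
    ∃ δ : ℝ≥0∞, 0 < δ ∧ EMetric.diam S + δ < ε ∧
      v * ENNReal.ofReal cα * (EMetric.diam S + δ) ^ α < μ S := by
  set d := EMetric.diam S with hd
  obtain ⟨r, hr, hδ1⟩ := ENNReal.lt_iff_exists_add_pos_lt.mp hdiam
  set δ1 : ℝ≥0∞ := (r : ℝ≥0∞) with hδ1d
  have hδ1pos : (0:ℝ≥0∞) < δ1 := ENNReal.coe_pos.mpr hr
  have hcont : Continuous fun t : ℝ≥0∞ => v * ENNReal.ofReal cα * (d + t) ^ α :=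
    (ENNReal.continuous_const_mul
        (ENNReal.mul_ne_top hv ENNReal.ofReal_ne_top)).comp
      (ENNReal.continuous_rpow_const.comp (continuous_const.add continuous_id))
  have h0 : v * ENNReal.ofReal cα * (d + 0) ^ α < μ S := by
    rw [add_zero]
    calc v * ENNReal.ofReal cα * d ^ α = v * zetaDiam cα α S := by rw [zetaDiam, mul_assoc]
    _ < μ S := hkey
  have hmem : {t : ℝ≥0∞ | v * ENNReal.ofReal cα * (d + t) ^ α < μ S} ∈ nhds (0:ℝ≥0∞) :=
    hcont.continuousAt.preimage_mem_nhds (Iio_mem_nhds h0)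
  obtain ⟨a, ha, hsub⟩ := ENNReal.nhds_zero_basis.mem_iff.mp hmem
  obtain ⟨δ2, h2pos, h2lt⟩ := exists_between ha
  refine ⟨min δ1 δ2, lt_min hδ1pos h2pos, ?_, ?_⟩
  · exact lt_of_le_of_lt (add_le_add_right (min_le_left _ _) d) hδ1
  · calc v * ENNReal.ofReal cα * (d + min δ1 δ2) ^ α
        ≤ v * ENNReal.ofReal cα * (d + δ2) ^ α :=
          mul_le_mul_right (ENNReal.rpow_le_rpow (add_le_add_right (min_le_right _ _) d) hα.le) _
    _ < μ S := hsub h2lt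

private lemma isOpen_W (μ : OuterMeasure X) {cα α : ℝ} (hα : 0 < α)
    (v ε : ℝ≥0∞) (hv : v ≠ ⊤) :
    IsOpen {x : X | ∃ S, S ∈ goodClass μ (closedSets X) (zetaDiam cα α) ∧
      x ∈ S ∧ EMetric.diam S < ε ∧ v < fedQuot μ (zetaDiam cα α) S} := by
  rw [EMetric.isOpen_iff]
  rintro x ⟨S, hSgood, hxS, hSd, hSQ⟩
  have hdne : EMetric.diam S ≠ ⊤ := (hSd.trans_le le_top).ne
  have hkey := key_mul_lt μ hα hSgood hdne hSQ
  have hμSpos : μ S ≠ 0 := (lt_of_le_of_lt zero_le hkey).ne'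
  obtain ⟨δ, hδpos, hδε, hδμ⟩ := exists_delta μ hα hv hSd hkey
  refine ⟨δ, hδpos, fun y hy => ?_⟩
  have hyx : edist y x < δ := EMetric.mem_ball.mp hy
  set T := insert y S with hT
  have hTclosed : IsClosed T := by
    rw [hT, Set.insert_eq]
    exact isClosed_singleton.union hSgood.1
  have hTd : EMetric.diam T ≤ EMetric.diam S + edist y x := by
    apply EMetric.diam_le
    intro a ha b hb
    have key : ∀ c ∈ S, edist c y ≤ EMetric.diam S + edist y x := by
      intro c hc
      calc edist c y ≤ edist c x + edist x y := edist_triangle _ _ _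
        _ ≤ EMetric.diam S + edist y x :=
          add_le_add (EMetric.edist_le_diam_of_mem hc hxS) (le_of_eq (edist_comm x y))
    rcases Set.mem_insert_iff.mp ha with ha' | ha' <;>
      rcases Set.mem_insert_iff.mp hb with hb' | hb'
    · rw [ha', hb', edist_self]; exact zero_le
    · rw [ha', edist_comm]; exact key b hb'
    · rw [hb']; exact key a ha'
    · exact le_trans (EMetric.edist_le_diam_of_mem ha' hb') (le_add_right le_rfl)
  have hTdδ : EMetric.diam T ≤ EMetric.diam S + δ := hTd.trans (add_le_add_right hyx.le _)
  have hTdlt : EMetric.diam T < ε := lt_of_le_of_lt hTdδ hδε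
  have hTdne : EMetric.diam T ≠ ⊤ := (hTdlt.trans_le le_top).ne
  have hζTtop : zetaDiam cα α T ≠ ⊤ := zeta_ne_top hα hTdne
  have hμT : μ S ≤ μ T := μ.mono (Set.subset_insert y S)
  have hμTne : μ T ≠ 0 := fun h0 => hμSpos (le_antisymm (h0 ▸ hμT) zero_le)
  have hTgood : T ∈ goodClass μ (closedSets X) (zetaDiam cα α) := by
    refine ⟨hTclosed, ?_⟩
    rintro (⟨-, h0⟩ | ⟨ht, -⟩)
    · exact hμTne h0
    · exact hζTtop ht
  have hkey2 : v * zetaDiam cα α T < μ T := by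
    calc v * zetaDiam cα α T = v * ENNReal.ofReal cα * EMetric.diam T ^ α := by
          rw [zetaDiam, mul_assoc]
      _ ≤ v * ENNReal.ofReal cα * (EMetric.diam S + δ) ^ α :=
          mul_le_mul_right (ENNReal.rpow_le_rpow hTdδ hα.le) _
      _ < μ S := hδμ
      _ ≤ μ T := hμT
  have hQT : v < fedQuot μ (zetaDiam cα α) T := by
    by_cases hζT0 : zetaDiam cα α T = 0
    · rw [fedQuot, if_pos hζT0]
      exact lt_top_iff_ne_top.mpr hv
    · rw [fedQuot, if_neg hζT0]
      exact (ENNReal.lt_div_iff_mul_lt (Or.inl hζT0) (Or.inl hζTtop)).mpr hkey2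
  exact ⟨T, hTgood, Set.mem_insert y S, hTdlt, hQT⟩

private lemma measurable_sup (μ : OuterMeasure X) {cα α : ℝ} (hα : 0 < α) (ε : ℝ≥0∞) :
    @Measurable X ℝ≥0∞ (borel X) ENNReal.measurableSpace
      (fun x => ⨆ (S : Set X) (_ : S ∈ goodClass μ (closedSets X) (zetaDiam cα α))
        (_ : x ∈ S) (_ : EMetric.diam S < ε), fedQuot μ (zetaDiam cα α) S) := by
  letI : MeasurableSpace X := borel X
  haveI : BorelSpace X := ⟨rfl⟩
  apply measurable_of_Ioi
  intro v
  by_cases hv : v = ⊤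
  · have : (fun x => ⨆ (S : Set X) (_ : S ∈ goodClass μ (closedSets X) (zetaDiam cα α))
        (_ : x ∈ S) (_ : EMetric.diam S < ε), fedQuot μ (zetaDiam cα α) S) ⁻¹' Set.Ioi v
        = ∅ := by
      ext x; simp [hv]
    rw [this]; exact MeasurableSet.empty
  · have : (fun x => ⨆ (S : Set X) (_ : S ∈ goodClass μ (closedSets X) (zetaDiam cα α))
        (_ : x ∈ S) (_ : EMetric.diam S < ε), fedQuot μ (zetaDiam cα α) S) ⁻¹' Set.Ioi v
        = {x : X | ∃ S, S ∈ goodClass μ (closedSets X) (zetaDiam cα α) ∧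
            x ∈ S ∧ EMetric.diam S < ε ∧ v < fedQuot μ (zetaDiam cα α) S} := by
      ext x
      simp only [Set.mem_preimage, Set.mem_Ioi, lt_iSup_iff, Set.mem_setOf_eq]
      tauto
    rw [this]
    exact (isOpen_W μ hα v ε hv).measurableSet

private lemma measurable_density (μ : OuterMeasure X) {cα α : ℝ} (hα : 0 < α) :
    @Measurable X ℝ≥0∞ (borel X) ENNReal.measurableSpace
      (federerDensity μ (closedSets X) (zetaDiam cα α)) := by
  letI : MeasurableSpace X := borel X
  haveI : BorelSpace X := ⟨rfl⟩
  have heq : federerDensity μ (closedSets X) (zetaDiam cα α)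
      = fun x => ⨅ n : ℕ, ⨆ (S : Set X) (_ : S ∈ goodClass μ (closedSets X) (zetaDiam cα α))
        (_ : x ∈ S) (_ : EMetric.diam S < ((n : ℝ≥0∞))⁻¹), fedQuot μ (zetaDiam cα α) S := by
    funext x
    apply le_antisymm
    · refine le_iInf fun n => ?_
      refine iInf_le_of_le ((n : ℝ≥0∞))⁻¹ (iInf_le_of_le ?_ le_rfl)
      exact ENNReal.inv_pos.mpr (ENNReal.natCast_ne_top n)
    · refine le_iInf₂ fun ε hε => ?_
      obtain ⟨n, hn⟩ := ENNReal.exists_inv_nat_lt hε.ne'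
      refine iInf_le_of_le n ?_
      refine iSup_le fun S => iSup_le fun hS => iSup_le fun hx => iSup_le fun hd => ?_
      exact le_iSup_of_le S (le_iSup_of_le hS (le_iSup_of_le hx
        (le_iSup_of_le (hd.trans hn) le_rfl)))
  rw [heq]
  exact Measurable.iInf fun n => measurable_sup μ hα _

end aux

/-- the Hausdorff Federer density `𝔡^α(μ,·)` is Borel with respect to the
subspace topology of `A`. -/
theorem stmt6 {X : Type*} [MetricSpace X] (μ : MeasureTheory.OuterMeasure X)
    (α cα : ℝ) (hα : 0 < α) (hc : 0 < cα) (A : Set X)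
    (h : CoversFinely (goodClass μ (closedSets X) (zetaDiam cα α)) A) :
    @Measurable A ℝ≥0∞ (borel A) ENNReal.measurableSpace
      (fun x : A => federerDensity μ (closedSets X) (zetaDiam cα α) (x : X)) := by
  letI : MeasurableSpace X := borel X
  haveI : BorelSpace X := ⟨rfl⟩
  letI : MeasurableSpace A := borel A
  haveI : BorelSpace A := ⟨rfl⟩
  exact (measurable_density μ hα).comp continuous_subtype_val.measurable
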